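/- Let L ≥ 2 and consider the L×L grid graph with vertex set [L]×[L]. Let {(v_{i_r}, v_{j_r})}_{r=1}^k be pairs of vertices with coordinates v_{i_r}=(X_r,Y_r), v_{j_r}=(X'_r,Y'_r), such that for all distinct p,q ∈ [k] we have {X_p, X'_p} ∩ {X_q, X'_q} = ∅ and {Y_p, Y'_p} ∩ {Y_q, Y'_q} = ∅. Then there exists a family {π_r}_{r=1}^k of pairwise edge-disjoint paths in the grid graph such that π_r connects v_{i_r} and v_{j_r}, and the length of π_r equals the L¹ (Manhattan) distance between v_{i_r} and v_{j_r}. -/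

import Mathlib

open SimpleGraph

private lemma pwalk_aux (L : ℕ) : ∀ (d : ℕ) (a b : Fin L), a.1 + d = b.1 →
    ∃ w : (pathGraph L).Walk a b, w.IsPath ∧ w.length = d ∧ ∀ x ∈ w.support, a.1 ≤ x.1 := by
  intro d
  induction d with
  | zero =>
    intro a b hab
    have : a = b := Fin.ext (by omega)
    subst this
    exact ⟨SimpleGraph.Walk.nil, SimpleGraph.Walk.IsPath.nil, rfl, by simp⟩
  | succ n ih =>
    intro a b hab
    have ha1 : a.1 + 1 < L := by have := b.2; omega
    set a' : Fin L := ⟨a.1 + 1, ha1⟩ with ha'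
    have hadj : (pathGraph L).Adj a a' := by
      rw [pathGraph_adj]; left; rfl
    obtain ⟨w, hp, hl, hs⟩ := ih a' b (by simp [ha']; omega)
    refine ⟨SimpleGraph.Walk.cons hadj w, ?_, by simp [hl], ?_⟩
    · refine hp.cons ?_
      intro hmem
      have := hs a hmem
      simp [ha'] at this
    · intro x hx
      rw [SimpleGraph.Walk.support_cons] at hx
      rcases List.mem_cons.mp hx with hx | hx
      · simp [hx]
      · have := hs x hx; simp [ha'] at this; omega

private lemma pwalk (L : ℕ) (a b : Fin L) :
    ∃ w : (pathGraph L).Walk a b, w.IsPath ∧ w.length = Nat.dist a.1 b.1 := by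
  rcases le_total a.1 b.1 with h | h
  · obtain ⟨w, hp, hl, -⟩ := pwalk_aux L (b.1 - a.1) a b (by omega)
    exact ⟨w, hp, by rw [hl, Nat.dist]; omega⟩
  · obtain ⟨w, hp, hl, -⟩ := pwalk_aux L (a.1 - b.1) b a (by omega)
    exact ⟨w.reverse, hp.reverse, by rw [SimpleGraph.Walk.length_reverse, hl, Nat.dist]; omega⟩

/-- In the `L × L` grid graph (`L ≥ 2`), given pairs of vertices
`(Xᵣ,Yᵣ), (X'ᵣ,Y'ᵣ)` whose x-coordinate sets and y-coordinate sets are pairwise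
disjoint across different pairs, there is a family of pairwise edge-disjoint paths
connecting each pair, with length equal to the Manhattan distance. -/
theorem stmt0 (L k : ℕ) (hL : 2 ≤ L)
    (X Y X' Y' : Fin k → Fin L)
    (hX : ∀ p q : Fin k, p ≠ q → ({X p, X' p} : Set (Fin L)) ∩ {X q, X' q} = ∅)
    (hY : ∀ p q : Fin k, p ≠ q → ({Y p, Y' p} : Set (Fin L)) ∩ {Y q, Y' q} = ∅) :
    ∃ π : (r : Fin k) →
        ((pathGraph L).boxProd (pathGraph L)).Walk (X r, Y r) (X' r, Y' r),
      (∀ r, (π r).IsPath) ∧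
      (∀ r s : Fin k, r ≠ s → ∀ e, e ∈ (π r).edges → e ∉ (π s).edges) ∧
      (∀ r, (π r).length = Nat.dist (X r).1 (X' r).1 + Nat.dist (Y r).1 (Y' r).1) := by
  classical
  have h1 : ∀ r : Fin k, ∃ w : (pathGraph L).Walk (X r) (X' r),
      w.IsPath ∧ w.length = Nat.dist (X r).1 (X' r).1 := fun r => pwalk L _ _
  have h2 : ∀ r : Fin k, ∃ w : (pathGraph L).Walk (Y r) (Y' r),
      w.IsPath ∧ w.length = Nat.dist (Y r).1 (Y' r).1 := fun r => pwalk L _ _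
  choose wx hwxp hwxl using h1
  choose wy hwyp hwyl using h2
  set G2 := (pathGraph L).boxProd (pathGraph L) with hG2
  set π : (r : Fin k) → G2.Walk (X r, Y r) (X' r, Y' r) := fun r =>
    ((wx r).map ((pathGraph L).boxProdLeft (pathGraph L) (Y r)).toHom).append
      ((wy r).map ((pathGraph L).boxProdRight (pathGraph L) (X' r)).toHom) with hπ
  -- support facts
  have hsupL : ∀ (r : Fin k) (z : Fin L × Fin L),
      z ∈ ((wx r).map ((pathGraph L).boxProdLeft (pathGraph L) (Y r)).toHom).support →
        z.2 = Y r := by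
    intro r z hz
    rw [SimpleGraph.Walk.support_map, List.mem_map] at hz
    obtain ⟨x, -, hx⟩ := hz
    rw [← hx]; rfl
  have hsupR : ∀ (r : Fin k) (z : Fin L × Fin L),
      z ∈ ((wy r).map ((pathGraph L).boxProdRight (pathGraph L) (X' r)).toHom).support →
        z.1 = X' r := by
    intro r z hz
    rw [SimpleGraph.Walk.support_map, List.mem_map] at hz
    obtain ⟨x, -, hx⟩ := hz
    rw [← hx]; rfl
  -- edge classification
  have hedge : ∀ (r : Fin k) (e : Sym2 (Fin L × Fin L)), e ∈ (π r).edges →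
      (∃ x1 x2 : Fin L, x1 ≠ x2 ∧ e = s((x1, Y r), (x2, Y r))) ∨
      (∃ y1 y2 : Fin L, y1 ≠ y2 ∧ e = s((X' r, y1), (X' r, y2))) := by
    intro r e he
    rw [show (π r).edges = ((wx r).map ((pathGraph L).boxProdLeft (pathGraph L) (Y r)).toHom).edges ++ ((wy r).map ((pathGraph L).boxProdRight (pathGraph L) (X' r)).toHom).edges from SimpleGraph.Walk.edges_append _ _] at he
    simp only [ List.mem_append,
      SimpleGraph.Walk.edges_map, List.mem_map] at he
    rcases he with ⟨e', he', rfl⟩ | ⟨e', he', rfl⟩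
    · left
      induction e' with
      | _ u v =>
        exact ⟨u, v, ((wx r).adj_of_mem_edges he').ne, rfl⟩
    · right
      induction e' with
      | _ u v =>
        exact ⟨u, v, ((wy r).adj_of_mem_edges he').ne, rfl⟩
  refine ⟨π, ?_, ?_, ?_⟩
  · -- paths
    intro r
    rw [SimpleGraph.Walk.isPath_def, show (π r).support = ((wx r).map ((pathGraph L).boxProdLeft (pathGraph L) (Y r)).toHom).support ++ ((wy r).map ((pathGraph L).boxProdRight (pathGraph L) (X' r)).toHom).support.tail from SimpleGraph.Walk.support_append _ _, List.nodup_append]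
    have hinjL : Function.Injective
        ⇑((pathGraph L).boxProdLeft (pathGraph L) (Y r)).toHom :=
      ((pathGraph L).boxProdLeft (pathGraph L) (Y r)).injective
    have hinjR : Function.Injective
        ⇑((pathGraph L).boxProdRight (pathGraph L) (X' r)).toHom :=
      ((pathGraph L).boxProdRight (pathGraph L) (X' r)).injective
    have hpL := SimpleGraph.Walk.map_isPath_of_injective hinjL (hwxp r)
    have hpR := SimpleGraph.Walk.map_isPath_of_injective hinjR (hwyp r)
    refine ⟨hpL.support_nodup, hpR.support_nodup.tail, ?_⟩
    intro z hzL z' hzR hzz; rw [← hzz] at hzR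
    have hz2 : z.2 = Y r := hsupL r z hzL
    have hzR' : z ∈ ((wy r).map ((pathGraph L).boxProdRight (pathGraph L) (X' r)).toHom).support :=
      List.mem_of_mem_tail hzR
    have hz1 : z.1 = X' r := hsupR r z hzR'
    -- so z is the junction; but junction is head of right support, excluded from tail
    have hzj : z = (X' r, Y r) := Prod.ext hz1 hz2
    have hnodup := hpR.support_nodup
    have hhead : ((wy r).map ((pathGraph L).boxProdRight (pathGraph L) (X' r)).toHom).support =
        (X' r, Y r) :: ((wy r).map ((pathGraph L).boxProdRight (pathGraph L) (X' r)).toHom).support.tail := by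
      exact SimpleGraph.Walk.support_eq_cons _
    rw [hhead, List.nodup_cons] at hnodup
    exact hnodup.1 (hzj ▸ hzR)
  · -- edge disjoint
    intro r s hrs e her hes
    have hYr : Y r ≠ Y s := by
      intro h
      have := hY r s hrs
      have : Y r ∈ ({Y r, Y' r} : Set (Fin L)) ∩ {Y s, Y' s} := ⟨by left; rfl, by left; exact h⟩
      rw [hY r s hrs] at this; exact this
    have hXr : X' r ≠ X' s := by
      intro h
      have : X' r ∈ ({X r, X' r} : Set (Fin L)) ∩ {X s, X' s} :=
        ⟨by right; rfl, by right; exact h⟩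
      rw [hX r s hrs] at this; exact this
    rcases hedge r e her with ⟨x1, x2, hx12, rfl⟩ | ⟨y1, y2, hy12, rfl⟩ <;>
      rcases hedge s _ hes with ⟨u1, u2, hu12, he⟩ | ⟨v1, v2, hv12, he⟩ <;>
      rw [Sym2.eq, Sym2.rel_iff', Prod.mk.injEq, Prod.mk.injEq, Prod.mk.injEq,
        Prod.mk.injEq, Prod.swap_prod_mk, Prod.mk.injEq, Prod.mk.injEq] at he
    · rcases he with ⟨⟨-, h⟩, -⟩ | ⟨⟨-, h⟩, -⟩ <;> exact hYr h
    · rcases he with ⟨⟨h1, -⟩, ⟨h2, -⟩⟩ | ⟨⟨h1, -⟩, ⟨h2, -⟩⟩ <;> exact hx12 (h1.trans h2.symm)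
    · rcases he with ⟨⟨-, h1⟩, ⟨-, h2⟩⟩ | ⟨⟨-, h1⟩, ⟨-, h2⟩⟩ <;> exact hy12 (h1.trans h2.symm)
    · rcases he with ⟨⟨h, -⟩, -⟩ | ⟨⟨h, -⟩, -⟩ <;> exact hXr h
  · -- lengths
    intro r
    rw [show (π r).length = ((wx r).map ((pathGraph L).boxProdLeft (pathGraph L) (Y r)).toHom).length + ((wy r).map ((pathGraph L).boxProdRight (pathGraph L) (X' r)).toHom).length from SimpleGraph.Walk.length_append _ _]
    simp [SimpleGraph.Walk.length_append, SimpleGraph.Walk.length_map, hwxl r, hwyl r]
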